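/- Let t₀, t₁, …, t_K be a sequence of positive real numbers satisfying t_{k+1} ≤ t_k − β·t_k^{1−γ} for k = 0, 1, …, K−1, where β > 0 and 0 < γ ≤ 1. Then K ≤ ⌈t₀^γ/(βγ)⌉. -/

import Mathlib

open Real

lemma step_18 {x y β γ : ℝ} (hx : 0 < x) (hy : 0 < y) (hβ : 0 < β)
    (hγ : 0 < γ) (hγ1 : γ ≤ 1) (h : y ≤ x - β * x ^ (1 - γ)) :
    y ^ γ ≤ x ^ γ - β * γ := by
  have hz : (0:ℝ) < y / x := div_pos hy hx
  have hb := rpow_one_add_le_one_add_mul_self (s := y / x - 1) (by linarith) hγ.le hγ1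
  rw [show (1 : ℝ) + (y / x - 1) = y / x by ring] at hb
  -- hb : (y/x)^γ ≤ 1 + γ*(y/x - 1)
  have hxγ : (0:ℝ) < x ^ γ := rpow_pos_of_pos hx γ
  have hdiv : (y / x) ^ γ = y ^ γ / x ^ γ := Real.div_rpow hy.le hx.le γ
  rw [hdiv] at hb
  have h1 : y ^ γ ≤ x ^ γ * (1 + γ * (y / x - 1)) := by
    calc y ^ γ = x ^ γ * (y ^ γ / x ^ γ) := by field_simp
    _ ≤ x ^ γ * (1 + γ * (y / x - 1)) := by
        exact mul_le_mul_of_nonneg_left hb hxγ.le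
  have hxx : x ^ γ * x ^ (1 - γ) = x := by
    rw [← Real.rpow_add hx]; norm_num
  have hkey : x ^ γ * (γ * (y / x - 1)) ≤ - (β * γ) := by
    have hyx : y / x - 1 ≤ - (β * x ^ (1 - γ) / x) := by
      rw [div_sub_one hx.ne', ← neg_div, div_le_div_iff_of_pos_right hx]
      linarith
    have h2 : x ^ γ * (γ * (y / x - 1)) ≤ x ^ γ * (γ * (- (β * x ^ (1 - γ) / x))) :=
      mul_le_mul_of_nonneg_left (mul_le_mul_of_nonneg_left hyx hγ.le) hxγ.le
    refine h2.trans_eq ?_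
    have hx0 : x ≠ 0 := hx.ne'
    field_simp
    linear_combination (-1 : ℝ) * hxx
  nlinarith [h1, hkey]

theorem stmt_18 (t : ℕ → ℝ) (K : ℕ) (β γ : ℝ)
    (hβ : 0 < β) (hγ : 0 < γ) (hγ1 : γ ≤ 1)
    (hpos : ∀ k ≤ K, 0 < t k)
    (hrec : ∀ k < K, t (k + 1) ≤ t k - β * t k ^ (1 - γ)) :
    (K : ℝ) ≤ ⌈t 0 ^ γ / (β * γ)⌉₊ := by
  have hmain : ∀ k ≤ K, t k ^ γ ≤ t 0 ^ γ - k * (β * γ) := by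
    intro k hk
    induction k with
    | zero => simp
    | succ n ih =>
      have hn : n ≤ K := Nat.le_of_succ_le hk
      have := step_18 (hpos n hn) (hpos (n+1) hk) hβ hγ hγ1 (hrec n hk)
      have := ih hn
      push_cast
      linarith
  have hK := hmain K le_rfl
  have htK : 0 < t K ^ γ := rpow_pos_of_pos (hpos K le_rfl) γ
  have hβγ : 0 < β * γ := mul_pos hβ hγ
  have h1 : (K : ℝ) ≤ t 0 ^ γ / (β * γ) := by
    rw [le_div_iff₀ hβγ]; linarith
  exact h1.trans (Nat.le_ceil _)
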